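/- Let P be a continuous function positive on (0,λ] and J(x) = sinh^{n₁}(x)·sinh^{n₂}(2x). Suppose u : ℝ → ℝ is C², even, strictly convex, u'(ℝ) = (−λ, λ), and u''(x)·P(u'(x)) = e^{−(t·u(x) + (1−t)·u_ref(x))}·J(x) for all x, where u_ref(x) = ln(e^{λx} + e^{−λx}) + C with C chosen so that ∫₀^∞ e^{−u_ref}J = ∫₀^λ P. If n₁ + 2n₂ < λ, then t < (λ − n₁ − 2n₂)/(λ − b̄) where b̄ = ∫₀^λ y P(y) dy / ∫₀^λ P(y) dy. -/

import Mathlib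

open MeasureTheory Set Filter

/-- Integrability on `(0,∞)` from continuity plus eventual exponential decay. -/
lemma integ_expdecay {h : ℝ → ℝ} (hc : Continuous h) {X M ε : ℝ} (hε : 0 < ε)
    (hb : ∀ x, X ≤ x → |h x| ≤ M * Real.exp (-(ε * x))) :
    MeasureTheory.IntegrableOn h (Set.Ioi (0:ℝ)) := by
  have h1 : IntegrableOn h (Set.Ioc 0 X) := hc.integrableOn_Ioc
  have h2 : IntegrableOn h (Set.Ioi X) := by
    have hexp : IntegrableOn (fun x => M * Real.exp (-(ε * x))) (Set.Ioi X) := by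
      rw [IntegrableOn]
      simpa [neg_mul] using (exp_neg_integrableOn_Ioi X hε).const_mul M
    refine Integrable.mono' hexp (hc.aestronglyMeasurable.restrict) ?_
    rw [ae_restrict_iff' measurableSet_Ioi]
    filter_upwards with x hx
    simpa [Real.norm_eq_abs] using hb x (le_of_lt hx)
  refine (h1.union h2).mono_set ?_
  intro x hx
  rcases le_or_gt x X with h | h
  · exact Or.inl ⟨hx, h⟩
  · exact Or.inr h

set_option maxHeartbeats 4000000 in
/-- Upper bound on the time of existence in the continuity method: if u is an even,
C², strictly convex solution with u'(ℝ) = (−λ,λ) of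
u''·P(u') = e^{−(tu+(1−t)u_ref)}·J, and n₁+2n₂ < λ, then
t < (λ − n₁ − 2n₂)/(λ − b̄) where b̄ is the weighted barycenter of [0,λ]. -/
theorem stmt_9 (n₁ n₂ : ℕ) (hn₁ : 0 < n₁) (lam t C : ℝ)
    (ht0 : 0 ≤ t) (ht1 : t ≤ 1)
    (P u J uref : ℝ → ℝ)
    (hPcont : Continuous P)
    (hPpos : ∀ y ∈ Set.Ioc (0:ℝ) lam, 0 < P y)
    (hJ : ∀ x, J x = Real.sinh x ^ n₁ * Real.sinh (2 * x) ^ n₂)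
    (huref : ∀ x, uref x = Real.log (Real.exp (lam * x) + Real.exp (-(lam * x))) + C)
    (hC : (∫ x in Set.Ioi (0:ℝ), Real.exp (-(uref x)) * J x) = ∫ y in (0:ℝ)..lam, P y)
    (hu2 : ContDiff ℝ 2 u)
    (heven : ∀ x, u (-x) = u x)
    (hconv : StrictConvexOn ℝ Set.univ u)
    (hrange : Set.range (deriv u) = Set.Ioo (-lam) lam)
    (heq : ∀ x, deriv (deriv u) x * P (deriv u x)
      = Real.exp (-(t * u x + (1 - t) * uref x)) * J x)
    (hlam : (n₁ : ℝ) + 2 * n₂ < lam) :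
    t < (lam - n₁ - 2 * n₂)
      / (lam - (∫ y in (0:ℝ)..lam, y * P y) / (∫ y in (0:ℝ)..lam, P y)) := by
  have hN1 : (1:ℝ) ≤ (n₁:ℝ) := by exact_mod_cast hn₁
  have hn2 : (0:ℝ) ≤ (n₂:ℝ) := Nat.cast_nonneg _
  set N : ℝ := (n₁:ℝ) + 2*n₂ with hNdef
  have hNpos : 0 < N := by simp only [hNdef]; linarith
  have hNlam : N < lam := by simp only [hNdef]; linarith
  have hlam0 : 0 < lam := lt_trans hNpos hNlam
  -- differentiability package
  have hud : Differentiable ℝ u := hu2.differentiable (by norm_num)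
  have h21 : ContDiff ℝ 1 (deriv u) := by
    have h : ContDiff ℝ ((1:ℕ) + 1) u := by exact_mod_cast hu2
    exact (contDiff_succ_iff_deriv.mp h).2.2
  set f := deriv u with hfdef
  have hfd : Differentiable ℝ f := h21.differentiable (by norm_num)
  have hf2cont : Continuous (deriv f) := (contDiff_one_iff_deriv.mp h21).2
  have hfcont : Continuous f := hfd.continuous
  have hfD : ∀ x, HasDerivAt u (f x) x := fun x => (hud x).hasDerivAt
  have hf2D : ∀ x, HasDerivAt f (deriv f x) x := fun x => (hfd x).hasDerivAt
  -- range facts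
  have hmem : ∀ x, f x ∈ Set.Ioo (-lam) lam := fun x => hrange ▸ Set.mem_range_self x
  have hflt : ∀ x, f x < lam := fun x => (hmem x).2
  have hfgt : ∀ x, -lam < f x := fun x => (hmem x).1
  have hfabs : ∀ x, |f x| ≤ lam := fun x =>
    abs_le.mpr ⟨by linarith [hfgt x], (hflt x).le⟩
  -- f 0 = 0
  have hf0 : f 0 = 0 := by
    have h1 : HasDerivAt (fun x : ℝ => u (-x)) (f (-(0:ℝ)) * (-1)) 0 :=
      (hfD (-(0:ℝ))).comp 0 (hasDerivAt_neg 0)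
    rw [funext heven] at h1
    have h2 := h1.unique (hfD 0)
    rw [neg_zero] at h2
    linarith
  -- f strictly monotone, tendsto lam
  have hsm : StrictMono f := by
    have h := StrictConvexOn.strictMonoOn_deriv hconv (fun x _ => hud x)
    intro a b hab
    exact h (Set.mem_univ a) (Set.mem_univ b) hab
  have hftend : Tendsto f atTop (nhds lam) := by
    have hb : BddAbove (Set.range f) := by
      rw [hrange]; exact bddAbove_Ioo
    have h1 := tendsto_atTop_ciSup hsm.monotone hb
    have h2 : (⨆ x, f x) = lam := by
      rw [show (⨆ x, f x) = sSup (Set.range f) from rfl, hrange,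
        csSup_Ioo (by linarith : -lam < lam)]
    rwa [h2] at h1
  -- reference derivative
  set r : ℝ → ℝ := fun x =>
    (lam * Real.exp (lam*x) - lam * Real.exp (-(lam*x))) /
      (Real.exp (lam*x) + Real.exp (-(lam*x))) with hrdef
  have hwpos : ∀ x : ℝ, 0 < Real.exp (lam*x) + Real.exp (-(lam*x)) := fun x => by positivity
  have hw : ∀ x:ℝ, HasDerivAt (fun x => Real.exp (lam*x) + Real.exp (-(lam*x)))
      (lam * Real.exp (lam*x) - lam * Real.exp (-(lam*x))) x := by
    intro x
    have h1 : HasDerivAt (fun x:ℝ => lam*x) lam x := by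
      simpa using (hasDerivAt_id x).const_mul lam
    have h2 := (Real.hasDerivAt_exp (lam*x)).comp x h1
    have h4 := (Real.hasDerivAt_exp (-(lam*x))).comp x h1.neg
    exact (h2.fun_add h4).congr_deriv (by ring)
  have hurefD : ∀ x, HasDerivAt uref (r x) x := by
    intro x
    rw [funext huref]
    have := ((hw x).log (hwpos x).ne').add_const C
    simpa [hrdef] using this
  have hrlt : ∀ x, r x < lam := by
    intro x
    rw [hrdef]
    rw [div_lt_iff₀ (hwpos x)]
    have := Real.exp_pos (-(lam*x))
    nlinarith
  have hrabs : ∀ x, |r x| ≤ lam := by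
    intro x
    rw [hrdef, abs_div, abs_of_pos (hwpos x), div_le_iff₀ (hwpos x)]
    have h1 := Real.exp_pos (lam*x)
    have h2 := Real.exp_pos (-(lam*x))
    rw [abs_le']
    constructor <;> [skip; rw [neg_le]] <;> nlinarith [abs_nonneg (lam * Real.exp (lam*x) - lam * Real.exp (-(lam*x))), le_abs_self (lam * Real.exp (lam*x) - lam * Real.exp (-(lam*x))), neg_abs_le (lam * Real.exp (lam*x) - lam * Real.exp (-(lam*x)))]
  have hrlim : Tendsto r atTop (nhds lam) := by
    have key : ∀ x:ℝ, r x = (lam - lam*Real.exp (-(2*lam*x))) / (1 + Real.exp (-(2*lam*x))) := by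
      intro x
      have e1 : Real.exp (-(lam*x)) = Real.exp (lam*x) * Real.exp (-(2*lam*x)) := by
        rw [← Real.exp_add]; ring_nf
      rw [hrdef, div_eq_div_iff (hwpos x).ne' (by positivity : (0:ℝ) < 1 + Real.exp (-(2*lam*x))).ne', e1]
      ring
    have hs : Tendsto (fun x:ℝ => Real.exp (-(2*lam*x))) atTop (nhds 0) := by
      apply Real.tendsto_exp_atBot.comp
      have h1 : Tendsto (fun x:ℝ => (2*lam)*x) atTop atTop :=
        Tendsto.const_mul_atTop (by linarith) tendsto_id
      have := tendsto_neg_atTop_atBot.comp h1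
      simpa [Function.comp_def] using this
    have hnum : Tendsto (fun x:ℝ => lam - lam * Real.exp (-(2*lam*x))) atTop
        (nhds (lam - lam*0)) := tendsto_const_nhds.sub (hs.const_mul lam)
    have hden : Tendsto (fun x:ℝ => 1 + Real.exp (-(2*lam*x))) atTop
        (nhds (1 + 0)) := tendsto_const_nhds.add hs
    have hdiv := hnum.div hden (by norm_num)
    simp only [mul_zero, sub_zero, add_zero, div_one] at hdiv
    exact Tendsto.congr (fun x => (key x).symm) hdiv
  have hexp1 : Continuous fun x:ℝ => Real.exp (lam*x) :=
    Real.continuous_exp.comp (continuous_const.mul continuous_id)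
  have hexp2 : Continuous fun x:ℝ => Real.exp (-(lam*x)) :=
    Real.continuous_exp.comp (continuous_const.mul continuous_id).neg
  have hrcont : Continuous r := by
    rw [hrdef]
    exact Continuous.div ((continuous_const.mul hexp1).sub (continuous_const.mul hexp2))
      (hexp1.add hexp2) (fun x => (hwpos x).ne')
  -- v and its derivative
  set v : ℝ → ℝ := fun x => t * u x + (1-t) * uref x with hvdef
  set v' : ℝ → ℝ := fun x => t * f x + (1-t) * r x with hv'def
  have hvD : ∀ x, HasDerivAt v (v' x) x :=
    fun x => ((hfD x).const_mul t).add ((hurefD x).const_mul (1-t))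
  have hv'abs : ∀ x, |v' x| ≤ lam := by
    intro x
    rw [hv'def]
    calc |t * f x + (1-t) * r x| ≤ |t * f x| + |(1-t) * r x| := abs_add_le _ _
      _ ≤ t * lam + (1-t) * lam := by
          rw [abs_mul, abs_mul, abs_of_nonneg ht0, abs_of_nonneg (by linarith : (0:ℝ) ≤ 1-t)]
          have h1 := hfabs x
          have h2 := hrabs x
          have := abs_nonneg (f x)
          have := abs_nonneg (r x)
          nlinarith
      _ = lam := by ring
  have hv'le : ∀ x, v' x ≤ t * f x + (1-t) * lam := by
    intro x
    simp only [hv'def]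
    have h1 := mul_le_mul_of_nonneg_left (hrlt x).le (by linarith : (0:ℝ) ≤ 1-t)
    linarith
  have hv'cont : Continuous v' := by
    rw [hv'def]; exact (continuous_const.mul hfcont).add (continuous_const.mul hrcont)
  have hvcont : Continuous v := by
    have : Differentiable ℝ v := fun x => (hvD x).differentiableAt
    exact this.continuous
  -- J facts
  set J' : ℝ → ℝ := fun x => (n₁:ℝ) * Real.sinh x ^ (n₁-1) * Real.cosh x * Real.sinh (2*x) ^ n₂
      + Real.sinh x ^ n₁ * ((n₂:ℝ) * Real.sinh (2*x) ^ (n₂-1) * (Real.cosh (2*x) * 2)) with hJ'def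
  have hJD : ∀ x, HasDerivAt J (J' x) x := by
    intro x
    rw [funext hJ]
    have h1 : HasDerivAt (fun x => Real.sinh x ^ n₁)
        ((n₁:ℝ) * Real.sinh x ^ (n₁-1) * Real.cosh x) x := by
      simpa using (Real.hasDerivAt_sinh x).fun_pow n₁
    have h2x : HasDerivAt (fun x:ℝ => 2*x) 2 x := by simpa using (hasDerivAt_id x).const_mul 2
    have h2 : HasDerivAt (fun x => Real.sinh (2*x)) (Real.cosh (2*x) * 2) x :=
      (Real.hasDerivAt_sinh (2*x)).comp x h2x
    have h3 := h2.pow n₂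
    exact h1.mul h3
  have hsinh2 : Continuous fun x:ℝ => Real.sinh (2*x) :=
    Real.continuous_sinh.comp (continuous_const.mul continuous_id)
  have hcosh2 : Continuous fun x:ℝ => Real.cosh (2*x) :=
    Real.continuous_cosh.comp (continuous_const.mul continuous_id)
  have hJcont : Continuous J := by
    rw [funext hJ]
    exact (Real.continuous_sinh.pow n₁).mul (hsinh2.pow n₂)
  have hJ'cont : Continuous J' := by
    rw [hJ'def]
    exact (((continuous_const.mul (Real.continuous_sinh.pow (n₁-1))).mul
      Real.continuous_cosh).mul (hsinh2.pow n₂)).add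
      ((Real.continuous_sinh.pow n₁).mul ((continuous_const.mul (hsinh2.pow (n₂-1))).mul
        (hcosh2.mul continuous_const)))
  have hJnonneg : ∀ x, 0 ≤ x → 0 ≤ J x := by
    intro x hx
    rw [hJ]
    have := Real.sinh_nonneg_iff.mpr hx
    have : (0:ℝ) ≤ Real.sinh (2*x) := Real.sinh_nonneg_iff.mpr (by linarith)
    positivity
  have hJ0 : J 0 = 0 := by
    rw [hJ]; simp [Real.sinh_zero, zero_pow hn₁.ne']
  -- J' > N J on positives
  have hJ'gt : ∀ x, 0 < x → N * J x < J' x := by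
    intro x hx
    obtain ⟨m, rfl⟩ : ∃ m, n₁ = m + 1 := ⟨n₁-1, (Nat.succ_pred_eq_of_pos hn₁).symm⟩
    have s1 : 0 < Real.sinh x := Real.sinh_pos_iff.mpr hx
    have s2 : 0 < Real.sinh (2*x) := Real.sinh_pos_iff.mpr (by linarith)
    have c1 : Real.sinh x < Real.cosh x := Real.sinh_lt_cosh x
    have c2 : Real.sinh (2*x) < Real.cosh (2*x) := Real.sinh_lt_cosh (2*x)
    rw [hJ, hJ'def, hNdef]
    simp only [Nat.add_sub_cancel]
    have hp1 : (0:ℝ) < Real.sinh x ^ m := pow_pos s1 m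
    have hp2 : (0:ℝ) < Real.sinh (2*x) ^ n₂ := pow_pos s2 n₂
    have t1 : ((m:ℝ)+1) * (Real.sinh x ^ m * Real.sinh x * Real.sinh (2*x) ^ n₂)
        < ((m:ℝ)+1) * Real.sinh x ^ m * Real.cosh x * Real.sinh (2*x) ^ n₂ := by
      have hm1 : (0:ℝ) < (m:ℝ)+1 := by positivity
      have key := mul_lt_mul_of_pos_left c1 (mul_pos (mul_pos hm1 hp1) hp2)
      linarith [key]
    have t2 : 2*(n₂:ℝ) * (Real.sinh x ^ (m+1) * Real.sinh (2*x) ^ n₂)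
        ≤ Real.sinh x ^ (m+1) * ((n₂:ℝ) * Real.sinh (2*x) ^ (n₂-1) * (Real.cosh (2*x) * 2)) := by
      rcases Nat.eq_zero_or_pos n₂ with h0 | hpos
      · subst h0; simp
      · obtain ⟨k, rfl⟩ : ∃ k, n₂ = k + 1 := ⟨n₂-1, (Nat.succ_pred_eq_of_pos hpos).symm⟩
        simp only [Nat.add_sub_cancel]
        have hp3 : (0:ℝ) < Real.sinh (2*x) ^ k := pow_pos s2 k
        have hp4 : (0:ℝ) < Real.sinh x ^ (m+1) := pow_pos s1 (m+1)
        have : Real.sinh (2*x) ^ (k+1) = Real.sinh (2*x) ^ k * Real.sinh (2*x) := pow_succ _ _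
        rw [this]
        have hk1 : (0:ℝ) < (k:ℝ)+1 := by positivity
        have key2 := mul_le_mul_of_nonneg_left c2.le
          (by positivity : (0:ℝ) ≤ 2*((k:ℝ)+1)*Real.sinh x^(m+1)*Real.sinh (2*x)^k)
        push_cast
        linarith [key2]
    push_cast
    have hps : Real.sinh x ^ (m+1) = Real.sinh x ^ m * Real.sinh x := pow_succ _ _
    rw [hps] at t2 ⊢
    linarith [t1, t2]
  -- J growth bounds
  have hsinh_le : ∀ x:ℝ, 0 ≤ x → Real.sinh x ≤ Real.exp x := by
    intro x hx
    rw [Real.sinh_eq]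
    have := Real.exp_pos (-x)
    linarith [Real.exp_pos x]
  have hcosh_le : ∀ x:ℝ, 0 ≤ x → Real.cosh x ≤ Real.exp x := by
    intro x hx
    rw [Real.cosh_eq]
    have h := Real.exp_le_exp.mpr (by linarith : -x ≤ x)
    linarith
  have hJle : ∀ x, 0 ≤ x → J x ≤ Real.exp (N*x) := by
    intro x hx
    rw [hJ]
    have h1 : Real.sinh x ^ n₁ ≤ Real.exp x ^ n₁ :=
      pow_le_pow_left₀ (Real.sinh_nonneg_iff.mpr hx) (hsinh_le x hx) n₁
    have h2 : Real.sinh (2*x) ^ n₂ ≤ Real.exp (2*x) ^ n₂ :=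
      pow_le_pow_left₀ (Real.sinh_nonneg_iff.mpr (by linarith)) (hsinh_le (2*x) (by linarith)) n₂
    calc Real.sinh x ^ n₁ * Real.sinh (2*x) ^ n₂
        ≤ Real.exp x ^ n₁ * Real.exp (2*x) ^ n₂ := by
          apply mul_le_mul h1 h2 (by positivity) (by positivity)
      _ = Real.exp (N*x) := by
          rw [← Real.exp_nat_mul, ← Real.exp_nat_mul, ← Real.exp_add, hNdef]
          ring_nf
  have hJ'nonneg : ∀ x, 0 ≤ x → 0 ≤ J' x := by
    intro x hx
    rw [hJ'def]
    have l1 := Real.sinh_nonneg_iff.mpr hx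
    have l2 : (0:ℝ) ≤ Real.sinh (2*x) := Real.sinh_nonneg_iff.mpr (by linarith)
    have l3 := (Real.cosh_pos x).le
    have l4 := (Real.cosh_pos (2*x)).le
    positivity
  have hJ'le : ∀ x, 0 ≤ x → |J' x| ≤ N * Real.exp (N*x) := by
    intro x hx
    rw [abs_of_nonneg (hJ'nonneg x hx), hJ'def]
    obtain ⟨m, hm⟩ : ∃ m, n₁ = m + 1 := ⟨n₁-1, (Nat.succ_pred_eq_of_pos hn₁).symm⟩
    subst hm
    simp only [Nat.add_sub_cancel]
    have l1 := Real.sinh_nonneg_iff.mpr hx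
    have l2 : (0:ℝ) ≤ Real.sinh (2*x) := Real.sinh_nonneg_iff.mpr (by linarith)
    have e1 : Real.sinh x ^ m ≤ Real.exp x ^ m := pow_le_pow_left₀ l1 (hsinh_le x hx) m
    have e1' : Real.sinh x ^ (m+1) ≤ Real.exp x ^ (m+1) :=
      pow_le_pow_left₀ l1 (hsinh_le x hx) (m+1)
    have e2 : Real.sinh (2*x) ^ n₂ ≤ Real.exp (2*x) ^ n₂ :=
      pow_le_pow_left₀ l2 (hsinh_le (2*x) (by linarith)) n₂
    have ec : Real.cosh x ≤ Real.exp x := hcosh_le x hx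
    have ec2 : Real.cosh (2*x) ≤ Real.exp (2*x) := hcosh_le (2*x) (by linarith)
    have hE1 : Real.exp x ^ m * Real.exp x * Real.exp (2*x) ^ n₂ = Real.exp (N*x) := by
      simp only [← Real.exp_nat_mul, ← Real.exp_add]
      congr 1
      rw [hNdef]; push_cast; ring
    have hNx : N * Real.exp (N*x)
        = ((m:ℝ)+1) * Real.exp (N*x) + (n₂:ℝ) * Real.exp (N*x) * 2 := by
      rw [hNdef]; push_cast; ring
    have hterm1 : ((m:ℝ)+1) * Real.sinh x ^ m * Real.cosh x * Real.sinh (2*x) ^ n₂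
        ≤ ((m:ℝ)+1) * Real.exp (N*x) := by
      have h1 : Real.sinh x ^ m * Real.cosh x * Real.sinh (2*x) ^ n₂
          ≤ Real.exp x ^ m * Real.exp x * Real.exp (2*x) ^ n₂ := by
        apply mul_le_mul _ e2 (by positivity) (by positivity)
        apply mul_le_mul e1 ec (Real.cosh_pos x).le (by positivity)
      have h1' : Real.sinh x ^ m * Real.cosh x * Real.sinh (2*x) ^ n₂ ≤ Real.exp (N*x) :=
        h1.trans_eq hE1
      have := mul_le_mul_of_nonneg_left h1' (by positivity : (0:ℝ) ≤ (m:ℝ)+1)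
      linarith
    have hterm2 : Real.sinh x ^ (m+1) * ((n₂:ℝ) * Real.sinh (2*x) ^ (n₂-1) * (Real.cosh (2*x) * 2))
        ≤ (n₂:ℝ) * Real.exp (N*x) * 2 := by
      rcases Nat.eq_zero_or_pos n₂ with h0 | hpos
      · subst h0; simp [Real.exp_nonneg]
      · obtain ⟨k, rfl⟩ : ∃ k, n₂ = k + 1 := ⟨n₂-1, (Nat.succ_pred_eq_of_pos hpos).symm⟩
        simp only [Nat.add_sub_cancel]
        have hE2 : Real.exp x ^ (m+1) * Real.exp (2*x) ^ (k+1) = Real.exp (N*x) := by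
          simp only [← Real.exp_nat_mul, ← Real.exp_add]
          congr 1
          rw [hNdef]; push_cast; ring
        have h2 : Real.sinh (2*x) ^ k * Real.cosh (2*x) ≤ Real.exp (2*x) ^ (k+1) := by
          rw [pow_succ]
          apply mul_le_mul (pow_le_pow_left₀ l2 (hsinh_le (2*x) (by linarith)) k) ec2
            (Real.cosh_pos (2*x)).le (by positivity)
        have h3 : Real.sinh x ^ (m+1) * (Real.sinh (2*x) ^ k * Real.cosh (2*x))
            ≤ Real.exp (N*x) := by
          calc Real.sinh x ^ (m+1) * (Real.sinh (2*x) ^ k * Real.cosh (2*x))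
              ≤ Real.exp x ^ (m+1) * Real.exp (2*x) ^ (k+1) :=
                mul_le_mul e1' h2
                  (mul_nonneg (pow_nonneg l2 k) (Real.cosh_pos (2*x)).le) (by positivity)
            _ = Real.exp (N*x) := hE2
        have h4 := mul_le_mul_of_nonneg_left h3
          (by positivity : (0:ℝ) ≤ 2*((k:ℝ)+1))
        push_cast
        nlinarith [h4]
    push_cast
    linarith
  -- G and its derivative
  set G : ℝ → ℝ := fun x => Real.exp (-(v x)) * J x with hGdef
  set G1 : ℝ → ℝ := fun x => Real.exp (-(v x)) * J' x with hG1def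
  have hGeq : ∀ x, deriv f x * P (f x) = G x := by
    intro x
    rw [heq x, hGdef, hvdef]
  have hGD : ∀ x, HasDerivAt G (G1 x - v' x * G x) x := by
    intro x
    have h1 : HasDerivAt (fun x => Real.exp (-(v x))) (Real.exp (-(v x)) * (-(v' x))) x :=
      HasDerivAt.exp (hvD x).neg
    have := h1.mul (hJD x)
    rw [hGdef, hG1def]
    exact this.congr_deriv (by ring)
  have hGnn : ∀ x, 0 ≤ x → 0 ≤ G x := by
    intro x hx
    rw [hGdef]
    exact mul_nonneg (Real.exp_pos _).le (hJnonneg x hx)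
  have hGcont : Continuous G := by
    rw [hGdef]; exact (Real.continuous_exp.comp hvcont.neg).mul hJcont
  have hG1cont : Continuous G1 := by
    rw [hG1def]; exact (Real.continuous_exp.comp hvcont.neg).mul hJ'cont
  -- exponential decay bounds
  set ε : ℝ := (lam - N)/2 with hεdef
  set c : ℝ := (N + lam)/2 with hcdef
  have hε : 0 < ε := by rw [hεdef]; linarith
  have hclam : c < lam := by rw [hcdef]; linarith
  have hcN : c = N + ε := by rw [hcdef, hεdef]; ring
  have hv'tend : Tendsto v' atTop (nhds lam) := by
    have h := (hftend.const_mul t).add (hrlim.const_mul (1-t))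
    have h2 : t*lam + (1-t)*lam = lam := by ring
    rw [h2] at h
    exact h.congr (fun x => by rw [hv'def])
  obtain ⟨X0, hX0⟩ : ∃ X0:ℝ, ∀ x ≥ X0, c ≤ v' x :=
    eventually_atTop.mp (hv'tend.eventually (eventually_ge_nhds hclam))
  set X : ℝ := max X0 0 with hXdef
  have hX0' : 0 ≤ X := le_max_right _ _
  -- lower bound for v
  have hvlb : ∀ x, X ≤ x → v X + c*(x - X) ≤ v x := by
    intro x hx
    have hmono : MonotoneOn (fun x => v x - c*x) (Set.Ici X) := by
      apply monotoneOn_of_deriv_nonneg (convex_Ici X)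
      · exact (hvcont.sub (continuous_const.mul continuous_id)).continuousOn
      · intro y hy
        exact ((hvD y).sub ((hasDerivAt_id y).const_mul c)).differentiableAt.differentiableWithinAt
      · intro y hy
        rw [interior_Ici] at hy
        have hd : deriv (fun x => v x - c*x) y = v' y - c := by
          have := (hvD y).sub (by simpa using (hasDerivAt_id y).const_mul c)
          exact this.deriv
        rw [hd]
        have := hX0 y (le_trans (le_max_left X0 0) (le_of_lt hy))
        linarith
    have := hmono (Set.self_mem_Ici) (Set.mem_Ici.mpr hx) hx
    simp only at this
    linarith
  set K : ℝ := Real.exp (c*X - v X) with hKdef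
  have hKpos : 0 < K := Real.exp_pos _
  have hexpb : ∀ x, X ≤ x → Real.exp (-(v x)) ≤ K * Real.exp (-(c*x)) := by
    intro x hx
    rw [hKdef, ← Real.exp_add]
    apply Real.exp_le_exp.mpr
    have := hvlb x hx
    linarith
  have hGb : ∀ x, X ≤ x → |G x| ≤ K * Real.exp (-(ε * x)) := by
    intro x hx
    have hx0 : 0 ≤ x := le_trans hX0' hx
    rw [abs_of_nonneg (hGnn x hx0), hGdef]
    calc Real.exp (-(v x)) * J x ≤ (K * Real.exp (-(c*x))) * Real.exp (N*x) := by
          apply mul_le_mul (hexpb x hx) (hJle x hx0) (hJnonneg x hx0) (by positivity)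
      _ = K * Real.exp (-(ε * x)) := by
          rw [mul_assoc, ← Real.exp_add]
          congr 1
          rw [hcN]; ring
  have hG1b : ∀ x, X ≤ x → |G1 x| ≤ (N*K) * Real.exp (-(ε * x)) := by
    intro x hx
    have hx0 : 0 ≤ x := le_trans hX0' hx
    rw [hG1def]
    simp only [abs_mul, abs_of_pos (Real.exp_pos _)]
    calc Real.exp (-(v x)) * |J' x| ≤ (K * Real.exp (-(c*x))) * (N * Real.exp (N*x)) := by
          apply mul_le_mul (hexpb x hx) (hJ'le x hx0) (abs_nonneg _) (by positivity)
      _ = (N*K) * Real.exp (-(ε * x)) := by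
          rw [show K * Real.exp (-(c*x)) * (N * Real.exp (N*x))
              = (N*K) * (Real.exp (-(c*x)) * Real.exp (N*x)) by ring, ← Real.exp_add]
          congr 1
          rw [hcN]; ring
  -- integrability
  have hGint : IntegrableOn G (Set.Ioi (0:ℝ)) := integ_expdecay hGcont hε hGb
  have hG1int : IntegrableOn G1 (Set.Ioi (0:ℝ)) := integ_expdecay hG1cont hε hG1b
  have hvGint : IntegrableOn (fun x => v' x * G x) (Set.Ioi (0:ℝ)) := by
    apply integ_expdecay (hv'cont.mul hGcont) hε (M := lam * K)
    intro x hx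
    calc |v' x * G x| = |v' x| * |G x| := abs_mul _ _
      _ ≤ lam * (K * Real.exp (-(ε * x))) := by
          apply mul_le_mul (hv'abs x) (hGb x hx) (abs_nonneg _) hlam0.le
      _ = lam * K * Real.exp (-(ε * x)) := by ring
  have hfGint : IntegrableOn (fun x => f x * G x) (Set.Ioi (0:ℝ)) := by
    apply integ_expdecay (hfcont.mul hGcont) hε (M := lam * K)
    intro x hx
    calc |f x * G x| = |f x| * |G x| := abs_mul _ _
      _ ≤ lam * (K * Real.exp (-(ε * x))) := by
          apply mul_le_mul (hfabs x) (hGb x hx) (abs_nonneg _) hlam0.le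
      _ = lam * K * Real.exp (-(ε * x)) := by ring
  -- G tendsto 0 at infinity
  have hGtend : Tendsto G atTop (nhds 0) := by
    apply squeeze_zero' (g := fun x => K * Real.exp (-(ε * x)))
    · filter_upwards [eventually_ge_atTop (0:ℝ)] with x hx using hGnn x hx
    · filter_upwards [eventually_ge_atTop X] with x hx
      exact (le_abs_self _).trans (hGb x hx)
    · have h1 : Tendsto (fun x:ℝ => Real.exp (-(ε*x))) atTop (nhds 0) := by
        apply Real.tendsto_exp_atBot.comp
        have h2 : Tendsto (fun x:ℝ => ε*x) atTop atTop :=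
          Tendsto.const_mul_atTop hε tendsto_id
        have := tendsto_neg_atTop_atBot.comp h2
        simpa [Function.comp_def] using this
      have := h1.const_mul K
      simpa using this
  -- FTC on (0,∞)
  have hFTC : (∫ x in Set.Ioi (0:ℝ), (G1 x - v' x * G x)) = 0 - G 0 :=
    integral_Ioi_of_hasDerivAt_of_tendsto (hGcont.continuousWithinAt)
      (fun x _ => hGD x) (hG1int.sub hvGint) hGtend
  have hG00 : G 0 = 0 := by rw [hGdef]; simp [hJ0]
  have hsplit : (∫ x in Set.Ioi (0:ℝ), G1 x) = ∫ x in Set.Ioi (0:ℝ), v' x * G x := by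
    have := integral_sub hG1int hvGint
    rw [hFTC, hG00, sub_zero] at this
    linarith [this]
  -- strict inequality: N ∫ G < ∫ G1
  have hpt : ∀ x ∈ Set.Ioi (0:ℝ), 0 < G1 x - N * G x := by
    intro x hx
    have h := hJ'gt x hx
    have he : G1 x - N * G x = Real.exp (-(v x)) * (J' x - N * J x) := by
      rw [hG1def, hGdef]; ring
    rw [he]
    exact mul_pos (Real.exp_pos _) (by linarith)
  have hintsub : IntegrableOn (fun x => G1 x - N * G x) (Set.Ioi (0:ℝ)) :=
    hG1int.sub (hGint.const_mul N)
  have hstrict : N * (∫ x in Set.Ioi (0:ℝ), G x) < ∫ x in Set.Ioi (0:ℝ), G1 x := by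
    have hae : 0 ≤ᵐ[volume.restrict (Set.Ioi (0:ℝ))] (fun x => G1 x - N * G x) := by
      rw [EventuallyLE, ae_restrict_iff' measurableSet_Ioi]
      filter_upwards with x hx
      simpa using (hpt x hx).le
    have hpos2 : 0 < ∫ x in Set.Ioi (0:ℝ), (G1 x - N * G x) := by
      refine (setIntegral_pos_iff_support_of_nonneg_ae hae hintsub).mpr ?_
      refine lt_of_lt_of_le ?_
        (measure_mono (fun x hx =>
          ⟨Function.mem_support.mpr (hpt x hx).ne', hx⟩ :
            Set.Ioi (0:ℝ) ⊆ Function.support (fun x => G1 x - N * G x) ∩ Set.Ioi 0))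
      simp [Real.volume_Ioi]
    have h3 := integral_sub hG1int (hGint.const_mul N)
    rw [integral_const_mul] at h3
    rw [h3] at hpos2
    linarith
  -- change of variables
  have hsubst : ∀ g : ℝ → ℝ, Continuous g →
      (∀ R:ℝ, (∫ x in (0:ℝ)..R, deriv f x • (g ∘ f) x) = ∫ y in (0:ℝ)..(f R), g y) := by
    intro g hg R
    have h := intervalIntegral.integral_comp_smul_deriv (f := f) (f' := fun x => deriv f x)
      (a := 0) (b := R) (fun x _ => hf2D x) hf2cont.continuousOn hg
    rwa [hf0] at h
  have hFcont : ∀ g : ℝ → ℝ, Continuous g →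
      Continuous (fun b => ∫ y in (0:ℝ)..b, g y) := fun g hg =>
    intervalIntegral.continuous_primitive (fun a b => hg.intervalIntegrable a b) 0
  have hA : (∫ x in Set.Ioi (0:ℝ), G x) = ∫ y in (0:ℝ)..lam, P y := by
    have h1 : Tendsto (fun R => ∫ x in (0:ℝ)..R, G x) atTop
        (nhds (∫ x in Set.Ioi (0:ℝ), G x)) :=
      intervalIntegral_tendsto_integral_Ioi 0 hGint tendsto_id
    have h2 : ∀ R:ℝ, (∫ x in (0:ℝ)..R, G x) = ∫ y in (0:ℝ)..(f R), P y := by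
      intro R
      rw [← hsubst P hPcont R]
      apply intervalIntegral.integral_congr
      intro x _
      simp only [Function.comp_apply, smul_eq_mul]
      exact (hGeq x).symm
    have h3 : Tendsto (fun R => ∫ y in (0:ℝ)..(f R), P y) atTop
        (nhds (∫ y in (0:ℝ)..lam, P y)) :=
      ((hFcont P hPcont).tendsto lam).comp hftend
    rw [funext h2] at h1
    exact tendsto_nhds_unique h1 h3
  have hB : (∫ x in Set.Ioi (0:ℝ), f x * G x) = ∫ y in (0:ℝ)..lam, y * P y := by
    have hQ : Continuous (fun y : ℝ => y * P y) := continuous_id.mul hPcont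
    have h1 : Tendsto (fun R => ∫ x in (0:ℝ)..R, f x * G x) atTop
        (nhds (∫ x in Set.Ioi (0:ℝ), f x * G x)) :=
      intervalIntegral_tendsto_integral_Ioi 0 hfGint tendsto_id
    have h2 : ∀ R:ℝ, (∫ x in (0:ℝ)..R, f x * G x) = ∫ y in (0:ℝ)..(f R), y * P y := by
      intro R
      rw [← hsubst _ hQ R]
      apply intervalIntegral.integral_congr
      intro x _
      simp only [Function.comp_apply, smul_eq_mul]
      rw [← hGeq x]
      ring
    have h3 : Tendsto (fun R => ∫ y in (0:ℝ)..(f R), y * P y) atTop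
        (nhds (∫ y in (0:ℝ)..lam, y * P y)) :=
      ((hFcont _ hQ).tendsto lam).comp hftend
    rw [funext h2] at h1
    exact tendsto_nhds_unique h1 h3
  -- positivity of the target quantities
  have hApos : 0 < ∫ y in (0:ℝ)..lam, P y :=
    intervalIntegral.intervalIntegral_pos_of_pos_on (hPcont.intervalIntegrable _ _)
      (fun x hx => hPpos x ⟨hx.1, hx.2.le⟩) hlam0
  have hABpos : 0 < lam * (∫ y in (0:ℝ)..lam, P y) - ∫ y in (0:ℝ)..lam, y * P y := by
    have h1 : 0 < ∫ y in (0:ℝ)..lam, (lam - y) * P y :=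
      intervalIntegral.intervalIntegral_pos_of_pos_on (((continuous_const.sub continuous_id).mul hPcont).intervalIntegrable _ _)
        (fun x hx => mul_pos (by linarith [hx.2]) (hPpos x ⟨hx.1, hx.2.le⟩)) hlam0
    have h2 : (∫ y in (0:ℝ)..lam, (lam - y) * P y)
        = lam * (∫ y in (0:ℝ)..lam, P y) - ∫ y in (0:ℝ)..lam, y * P y := by
      have hsub : (∫ y in (0:ℝ)..lam, (lam * P y - y * P y))
          = (∫ y in (0:ℝ)..lam, lam * P y) - ∫ y in (0:ℝ)..lam, y * P y :=
        intervalIntegral.integral_sub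
          ((continuous_const.mul hPcont).intervalIntegrable (0:ℝ) lam)
          ((continuous_id.mul hPcont).intervalIntegrable (0:ℝ) lam)
      rw [intervalIntegral.integral_const_mul] at hsub
      rw [← hsub]
      apply intervalIntegral.integral_congr
      intro x _
      simp only [id_eq]
      ring
    linarith
  -- upper bound for the weighted integral
  have hI3le : (∫ x in Set.Ioi (0:ℝ), v' x * G x)
      ≤ t * (∫ y in (0:ℝ)..lam, y * P y) + (1-t) * lam * (∫ y in (0:ℝ)..lam, P y) := by
    have hrhsint : IntegrableOn (fun x => t * (f x * G x) + ((1-t)*lam) * G x)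
        (Set.Ioi (0:ℝ)) := (hfGint.const_mul t).add (hGint.const_mul _)
    have hmono2 : (∫ x in Set.Ioi (0:ℝ), v' x * G x)
        ≤ ∫ x in Set.Ioi (0:ℝ), (t * (f x * G x) + ((1-t)*lam) * G x) := by
      apply setIntegral_mono_on hvGint hrhsint measurableSet_Ioi
      intro x hx
      have hG0 := hGnn x (le_of_lt hx)
      nlinarith [hv'le x]
    rw [integral_add (hfGint.const_mul t) (hGint.const_mul _), integral_const_mul,
      integral_const_mul, hB, hA] at hmono2
    linarith
  -- combining everything
  have hmain : N * (∫ y in (0:ℝ)..lam, P y)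
      < t * (∫ y in (0:ℝ)..lam, y * P y) + (1-t) * lam * (∫ y in (0:ℝ)..lam, P y) := by
    have h1 := hstrict
    rw [hA] at h1
    exact lt_of_lt_of_le (h1.trans_eq hsplit) hI3le
  -- final arithmetic
  have hgoal : (lam - (n₁:ℝ) - 2*(n₂:ℝ)) = lam - N := by rw [hNdef]; ring
  rw [hgoal]
  set A := ∫ y in (0:ℝ)..lam, P y with hAdef
  set B := ∫ y in (0:ℝ)..lam, y * P y with hBdef
  have hd : lam - B / A = (lam*A - B)/A := by field_simp
  rw [hd, div_div_eq_mul_div, lt_div_iff₀ hABpos]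
  nlinarith [hmain, hApos]
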